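/- For the 2×n king graph, the domination polynomial evaluated at -1 equals (-1)^{⌈n/2⌉}. -/

import Mathlib

/-- The `m × n` king graph: vertices are squares of an `m × n` board
(vertex `p` represents board square `(p.1.val + 1, p.2.val + 1)`), with
`p` adjacent to `q` iff `p ≠ q` and `max |x−x'| |y−y'| = 1`. -/
def kingGraph (m n : ℕ) : SimpleGraph (Fin m × Fin n) where
  Adj p q := p ≠ q ∧
    max ((p.1.val : ℤ) - q.1.val).natAbs ((p.2.val : ℤ) - q.2.val).natAbs = 1
  symm := by
    constructor
    intro p q ⟨h1, h2⟩
    refine ⟨h1.symm, ?_⟩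
    rw [show ((q.1.val : ℤ) - p.1.val) = -((p.1.val : ℤ) - q.1.val) by ring,
      show ((q.2.val : ℤ) - p.2.val) = -((p.2.val : ℤ) - q.2.val) by ring,
      Int.natAbs_neg, Int.natAbs_neg]
    exact h2
  loopless := by constructor; intro p ⟨h1, _⟩; exact h1 rfl

instance (m n : ℕ) : DecidableRel (kingGraph m n).Adj :=
  fun p q => decidable_of_iff (p ≠ q ∧
    max ((p.1.val : ℤ) - q.1.val).natAbs ((p.2.val : ℤ) - q.2.val).natAbs = 1) Iff.rfl

/-- `S` is a dominating set: every vertex is in `S` or adjacent to a member of `S`. -/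
def IsDomSet {V : Type*} (G : SimpleGraph V) (S : Finset V) : Prop :=
  ∀ v, v ∈ S ∨ ∃ u ∈ S, G.Adj u v

instance {V : Type*} [Fintype V] [DecidableEq V] (G : SimpleGraph V)
    [DecidableRel G.Adj] : DecidablePred (IsDomSet G) :=
  fun _ => inferInstanceAs (Decidable (∀ _, _ ∨ _))

/-! ### Auxiliary development: column DP -/

/-- A column of a width-2 board. -/
abbrev KCol := Fin 2 → Bool

/-- weight of a column: `(-1)^(number of occupied cells)`. -/
def kwt (x : KCol) : ℤ := (-1) ^ (Finset.univ.filter (fun i => x i = true)).card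

/-- weight of a column sequence. -/
def kwprod {n : ℕ} (c : Fin n → KCol) : ℤ := ∏ j, kwt (c j)

/-- column `j` is occupied. -/
def kocc {n : ℕ} (c : Fin n → KCol) (j : Fin n) : Prop := ∃ i, c j i = true

instance {n : ℕ} (c : Fin n → KCol) (j : Fin n) : Decidable (kocc c j) :=
  inferInstanceAs (Decidable (∃ _, _))

/-- column `j` is covered: some column at distance ≤ 1 is occupied. -/
def kcov {n : ℕ} (c : Fin n → KCol) (j : Fin n) : Prop :=
  ∃ j' : Fin n, j'.val ≤ j.val + 1 ∧ j.val ≤ j'.val + 1 ∧ kocc c j'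

instance {n : ℕ} (c : Fin n → KCol) (j : Fin n) : Decidable (kcov c j) :=
  inferInstanceAs (Decidable (∃ _, _))

/-- all columns covered. -/
def kdom {n : ℕ} (c : Fin n → KCol) : Prop := ∀ j, kcov c j

instance {n : ℕ} (c : Fin n → KCol) : Decidable (kdom c) :=
  inferInstanceAs (Decidable (∀ _, _))

/-- state A: dominated, first column occupied. -/
def stA {n : ℕ} (c : Fin (n + 1) → KCol) : Prop := kdom c ∧ kocc c 0
/-- state B: dominated, first column unoccupied. -/
def stB {n : ℕ} (c : Fin (n + 1) → KCol) : Prop := kdom c ∧ ¬ kocc c 0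
/-- state C: first column uncovered, all others covered. -/
def stC {n : ℕ} (c : Fin (n + 1) → KCol) : Prop :=
  ¬ kcov c 0 ∧ ∀ j, j ≠ 0 → kcov c j

instance {n : ℕ} (c : Fin (n + 1) → KCol) : Decidable (stA c) := instDecidableAnd
instance {n : ℕ} (c : Fin (n + 1) → KCol) : Decidable (stB c) := instDecidableAnd
instance {n : ℕ} (c : Fin (n + 1) → KCol) : Decidable (stC c) := instDecidableAnd

def gA (n : ℕ) : ℤ :=
  ∑ c ∈ Finset.univ.filter (fun c : Fin (n + 1) → KCol => stA c), kwprod c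
def gB (n : ℕ) : ℤ :=
  ∑ c ∈ Finset.univ.filter (fun c : Fin (n + 1) → KCol => stB c), kwprod c
def gC (n : ℕ) : ℤ :=
  ∑ c ∈ Finset.univ.filter (fun c : Fin (n + 1) → KCol => stC c), kwprod c

lemma kocc_tail {n : ℕ} (c : Fin (n + 2) → KCol) (j : Fin (n + 1)) :
    kocc (Fin.tail c) j ↔ kocc c j.succ := Iff.rfl

lemma kcov_zero {n : ℕ} (c : Fin (n + 2) → KCol) :
    kcov c 0 ↔ kocc c 0 ∨ kocc c 1 := by
  have hv0 : ((0 : Fin (n + 2)) : ℕ) = 0 := rfl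
  have hv1 : ((1 : Fin (n + 2)) : ℕ) = 1 := rfl
  constructor
  · rintro ⟨j', h1, h2, h3⟩
    rw [hv0] at h1 h2
    have hj : j'.val = 0 ∨ j'.val = 1 := by omega
    rcases hj with h | h
    · left; rwa [show j' = 0 from Fin.ext (by rw [h, hv0])] at h3
    · right; rwa [show j' = 1 from Fin.ext (by rw [h, hv1])] at h3
  · rintro (h | h)
    · exact ⟨0, by omega, by omega, h⟩
    · exact ⟨1, by rw [hv0, hv1], by rw [hv0, hv1]; omega, h⟩

lemma kcov_succ {n : ℕ} (c : Fin (n + 2) → KCol) (j : Fin (n + 1)) :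
    kcov c j.succ ↔ kcov (Fin.tail c) j ∨ (j = 0 ∧ kocc c 0) := by
  have hv0 : ((0 : Fin (n + 2)) : ℕ) = 0 := rfl
  have hv0' : ((0 : Fin (n + 1)) : ℕ) = 0 := rfl
  constructor
  · rintro ⟨j', h1, h2, h3⟩
    rcases Fin.eq_zero_or_eq_succ j' with rfl | ⟨k, rfl⟩
    · right
      rw [hv0, Fin.val_succ] at h2
      have : j.val = 0 := by omega
      exact ⟨Fin.ext (by rw [this, hv0']), h3⟩
    · left
      rw [Fin.val_succ, Fin.val_succ] at h1 h2
      exact ⟨k, by omega, by omega, h3⟩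
  · rintro (⟨k, h1, h2, h3⟩ | ⟨rfl, h⟩)
    · exact ⟨k.succ, by rw [Fin.val_succ, Fin.val_succ]; omega,
        by rw [Fin.val_succ, Fin.val_succ]; omega, h3⟩
    · exact ⟨0, by simp [Fin.val_succ], by simp [Fin.val_succ], h⟩

lemma kdom_cons_iff {n : ℕ} (c : Fin (n + 2) → KCol) :
    kdom c ↔ kcov c 0 ∧ ∀ j : Fin (n + 1), kcov c j.succ := by
  constructor
  · intro h; exact ⟨h 0, fun j => h j.succ⟩
  · rintro ⟨h0, h⟩ j
    rcases Fin.eq_zero_or_eq_succ j with rfl | ⟨k, rfl⟩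
    · exact h0
    · exact h k

lemma stA_iff {n : ℕ} (c : Fin (n + 2) → KCol) :
    stA c ↔ kocc c 0 ∧ (stA (Fin.tail c) ∨ stB (Fin.tail c) ∨ stC (Fin.tail c)) := by
  have hocc0 : kocc (Fin.tail c) 0 ↔ kocc c 1 := Iff.rfl
  constructor
  · rintro ⟨hdom, hocc⟩
    refine ⟨hocc, ?_⟩
    rw [kdom_cons_iff] at hdom
    have hall : ∀ j : Fin (n + 1), j ≠ 0 → kcov (Fin.tail c) j := by
      intro j hj
      have := hdom.2 j
      rw [kcov_succ] at this
      rcases this with h | ⟨h, _⟩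
      · exact h
      · exact absurd h hj
    by_cases hc0 : kcov (Fin.tail c) 0
    · have : kdom (Fin.tail c) := by
        intro j
        by_cases hj : j = 0
        · subst hj; exact hc0
        · exact hall j hj
      by_cases ho : kocc (Fin.tail c) 0
      · exact Or.inl ⟨this, ho⟩
      · exact Or.inr (Or.inl ⟨this, ho⟩)
    · exact Or.inr (Or.inr ⟨hc0, hall⟩)
  · rintro ⟨hocc, hst⟩
    refine ⟨?_, hocc⟩
    rw [kdom_cons_iff]
    constructor
    · rw [kcov_zero]; exact Or.inl hocc
    · intro j
      rw [kcov_succ]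
      by_cases hj : j = 0
      · exact Or.inr ⟨hj, hocc⟩
      · left
        rcases hst with ⟨hd, _⟩ | ⟨hd, _⟩ | ⟨_, hd⟩
        · exact hd j
        · exact hd j
        · exact hd j hj

lemma stB_iff {n : ℕ} (c : Fin (n + 2) → KCol) :
    stB c ↔ ¬ kocc c 0 ∧ stA (Fin.tail c) := by
  constructor
  · rintro ⟨hdom, hocc⟩
    refine ⟨hocc, ?_, ?_⟩
    · intro j
      have := (kdom_cons_iff c).1 hdom
      have h2 := this.2 j
      rw [kcov_succ] at h2
      rcases h2 with h | ⟨_, h⟩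
      · exact h
      · exact absurd h hocc
    · have := (kdom_cons_iff c).1 hdom
      have h0 := this.1
      rw [kcov_zero] at h0
      rcases h0 with h | h
      · exact absurd h hocc
      · exact h
  · rintro ⟨hocc, hdom, ho⟩
    refine ⟨?_, hocc⟩
    rw [kdom_cons_iff]
    constructor
    · rw [kcov_zero]; exact Or.inr ho
    · intro j
      rw [kcov_succ]
      exact Or.inl (hdom j)

lemma stC_iff {n : ℕ} (c : Fin (n + 2) → KCol) :
    stC c ↔ ¬ kocc c 0 ∧ stB (Fin.tail c) := by
  constructor
  · rintro ⟨hcov, hall⟩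
    have hocc : ¬ kocc c 0 := fun h => hcov ((kcov_zero c).2 (Or.inl h))
    have hocc1 : ¬ kocc c 1 := fun h => hcov ((kcov_zero c).2 (Or.inr h))
    refine ⟨hocc, ?_, hocc1⟩
    intro j
    by_cases hj : j = 0
    · subst hj
      have h1succ : (1 : Fin (n + 2)) = (0 : Fin (n + 1)).succ := by
        apply Fin.ext; rw [Fin.val_succ]; rfl
      have := hall 1 (by simp [Fin.ext_iff])
      rw [h1succ, kcov_succ] at this
      rcases this with h | ⟨_, h⟩
      · exact h
      · exact absurd h hocc
    · have := hall j.succ (Fin.succ_ne_zero j)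
      rw [kcov_succ] at this
      rcases this with h | ⟨h, _⟩
      · exact h
      · exact absurd h hj
  · rintro ⟨hocc, ⟨hdom, ho⟩⟩
    constructor
    · rw [kcov_zero]; rintro (h | h)
      · exact hocc h
      · exact ho h
    · intro j hj
      rcases Fin.eq_zero_or_eq_succ j with rfl | ⟨k, rfl⟩
      · exact absurd rfl hj
      · rw [kcov_succ]; exact Or.inl (hdom k)

/-- splitting a filtered sum over `Fin (n+2) → KCol` into head/tail. -/
lemma sum_split {n : ℕ} (P : KCol → Prop) [DecidablePred P]
    (T : (Fin (n + 1) → KCol) → Prop) [DecidablePred T] :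
    ∑ c ∈ Finset.univ.filter
        (fun c : Fin (n + 2) → KCol => P (c 0) ∧ T (Fin.tail c)), kwprod c =
      (∑ x ∈ Finset.univ.filter P, kwt x) *
        (∑ c ∈ Finset.univ.filter T, kwprod c) := by
  rw [Finset.sum_filter, Finset.sum_filter, Finset.sum_filter]
  rw [← Equiv.sum_comp (Fin.consEquiv (fun _ : Fin (n + 2) => KCol))
    (fun c : Fin (n + 2) → KCol => if P (c 0) ∧ T (Fin.tail c) then kwprod c else 0)]
  rw [Fintype.sum_prod_type]
  rw [Finset.sum_mul_sum]
  apply Finset.sum_congr rfl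
  intro x _
  apply Finset.sum_congr rfl
  intro c _
  have he : (Fin.consEquiv (fun _ : Fin (n + 2) => KCol)) (x, c) = Fin.cons x c := rfl
  rw [he]
  have h3 : kwprod (Fin.cons x c) = kwt x * kwprod c := by
    unfold kwprod
    rw [Fin.prod_univ_succ, Fin.cons_zero]
    exact congrArg (kwt x * ·) (Finset.prod_congr rfl fun j _ => by rw [Fin.cons_succ])
  rw [Fin.cons_zero, Fin.tail_cons, h3]
  by_cases hP : P x <;> by_cases hT : T c <;> simp [hP, hT]

lemma sum_occ : ∑ x ∈ Finset.univ.filter (fun x : KCol => ∃ i, x i = true), kwt x = -1 := by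
  decide

lemma gA_succ (n : ℕ) : gA (n + 1) = -(gA n + gB n + gC n) := by
  unfold gA gB gC
  have hiff : ∀ c : Fin (n + 2) → KCol, stA c ↔
      (∃ i, c 0 i = true) ∧ (fun c' => stA c' ∨ stB c' ∨ stC c') (Fin.tail c) :=
    fun c => stA_iff c
  rw [Finset.filter_congr (fun c _ => by rw [hiff c])]
  rw [sum_split (fun x : KCol => ∃ i, x i = true) (fun c' => stA c' ∨ stB c' ∨ stC c')]
  rw [sum_occ]
  rw [Finset.sum_filter, Finset.sum_filter, Finset.sum_filter, Finset.sum_filter]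
  rw [← Finset.sum_add_distrib, ← Finset.sum_add_distrib, Finset.mul_sum, ← Finset.sum_neg_distrib]
  apply Finset.sum_congr rfl
  intro c _
  by_cases hA : stA c
  · have hB : ¬ stB c := fun h => h.2 hA.2
    have hC : ¬ stC c := fun h => h.1 (hA.1 0)
    simp [hA, hB, hC]
  · by_cases hB : stB c
    · have hC : ¬ stC c := fun h => h.1 (hB.1 0)
      simp [hA, hB, hC]
    · by_cases hC : stC c <;> simp [hA, hB, hC]

lemma gB_succ (n : ℕ) : gB (n + 1) = gA n := by
  unfold gA gB
  have : ∀ c : Fin (n + 2) → KCol, stB c ↔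
      (¬ ∃ i, c 0 i = true) ∧ stA (Fin.tail c) := fun c => stB_iff c
  rw [Finset.filter_congr (fun c _ => by rw [this c])]
  rw [sum_split (fun x : KCol => ¬ ∃ i, x i = true) stA]
  have : ∑ x ∈ Finset.univ.filter (fun x : KCol => ¬ ∃ i, x i = true), kwt x = 1 := by
    decide
  rw [this, one_mul]

lemma gC_succ (n : ℕ) : gC (n + 1) = gB n := by
  unfold gB gC
  have : ∀ c : Fin (n + 2) → KCol, stC c ↔
      (¬ ∃ i, c 0 i = true) ∧ stB (Fin.tail c) := fun c => stC_iff c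
  rw [Finset.filter_congr (fun c _ => by rw [this c])]
  rw [sum_split (fun x : KCol => ¬ ∃ i, x i = true) stB]
  have : ∑ x ∈ Finset.univ.filter (fun x : KCol => ¬ ∃ i, x i = true), kwt x = 1 := by
    decide
  rw [this, one_mul]

/-- the closed-form table. -/
def ktbl (n : ℕ) : ℤ × ℤ × ℤ :=
  match n % 4 with
  | 0 => (-1, 0, 1)
  | 1 => (0, -1, 0)
  | 2 => (1, 0, -1)
  | _ => (0, 1, 0)

lemma g_base : gA 0 = -1 ∧ gB 0 = 0 ∧ gC 0 = 1 := by
  refine ⟨by unfold gA; decide +kernel, by unfold gB; decide +kernel, by unfold gC; decide +kernel⟩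

lemma g_eq_tbl (n : ℕ) : (gA n, gB n, gC n) = ktbl n := by
  induction n with
  | zero =>
    obtain ⟨h1, h2, h3⟩ := g_base
    simp [h1, h2, h3, ktbl]
  | succ n ih =>
    rw [gA_succ, gB_succ, gC_succ]
    have h4 : (n + 1) % 4 = (n % 4 + 1) % 4 := by omega
    unfold ktbl
    unfold ktbl at ih
    have hm : n % 4 = 0 ∨ n % 4 = 1 ∨ n % 4 = 2 ∨ n % 4 = 3 := by omega
    rcases hm with h | h | h | h <;>
      · rw [h] at ih
        simp only [Prod.mk.injEq] at ih
        obtain ⟨e1, e2, e3⟩ := ih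
        rw [e1, e2, e3, h4, h]
        norm_num

/-! ### From the king graph to the column DP -/

/-- king-graph domination in terms of column distances. -/
lemma isDomSet_iff {n : ℕ} (S : Finset (Fin 2 × Fin n)) :
    IsDomSet (kingGraph 2 n) S ↔
      ∀ j : Fin n, ∃ p ∈ S, p.2.val ≤ j.val + 1 ∧ j.val ≤ p.2.val + 1 := by
  constructor
  · intro h j
    rcases h (0, j) with hmem | ⟨u, hu, hadj⟩
    · exact ⟨(0, j), hmem, by dsimp; omega, by dsimp; omega⟩
    · obtain ⟨-, hmax⟩ := hadj
      have h2 : ((u.2.val : ℤ) - ((0 : Fin 2), j).2.val).natAbs ≤ 1 :=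
        le_of_max_le_right hmax.le
      dsimp at h2
      exact ⟨u, hu, by omega, by omega⟩
  · intro h v
    obtain ⟨i, j⟩ := v
    obtain ⟨p, hp, h1, h2⟩ := h j
    by_cases hpv : p = (i, j)
    · left; rwa [hpv] at hp
    · right
      refine ⟨p, hp, hpv, ?_⟩
      dsimp only
      have hx1 := p.1.isLt
      have hi1 := i.isLt
      rcases eq_or_ne p.2 j with he | hne
      · have hxne : p.1.val ≠ i.val := by
          intro hc; exact hpv (Prod.ext (Fin.ext hc) he)
        have hyv : p.2.val = j.val := congrArg Fin.val he
        omega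
      · have hyne : p.2.val ≠ j.val := fun hc => hne (Fin.ext hc)
        omega

/-- the bijection between subsets and column functions. -/
def colsOf {n : ℕ} (S : Finset (Fin 2 × Fin n)) : Fin n → KCol :=
  fun j i => (i, j) ∈ S

lemma sum_king_eq {n : ℕ} :
    ∑ S ∈ Finset.univ.filter (IsDomSet (kingGraph 2 n)), (-1 : ℤ) ^ S.card =
      ∑ c ∈ Finset.univ.filter (fun c : Fin n → KCol => kdom c), kwprod c := by
  apply Finset.sum_nbij' (i := colsOf)
    (j := fun c => Finset.univ.filter (fun p : Fin 2 × Fin n => c p.2 p.1 = true))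
  · intro S hS
    simp only [Finset.mem_filter, Finset.mem_univ, true_and] at hS ⊢
    rw [isDomSet_iff] at hS
    intro j
    obtain ⟨p, hp, h1, h2⟩ := hS j
    exact ⟨p.2, h1, h2, p.1, by simp [colsOf, hp]⟩
  · intro c hc
    simp only [Finset.mem_filter, Finset.mem_univ, true_and] at hc ⊢
    rw [isDomSet_iff]
    intro j
    obtain ⟨j', h1, h2, i, hi⟩ := hc j
    exact ⟨(i, j'), by simp [hi], h1, h2⟩
  · intro S _
    ext p
    simp [colsOf]
  · intro c _
    funext j i
    simp [colsOf]
  · intro S hS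
    unfold kwprod
    have hcard : S.card = ∑ j : Fin n, (Finset.univ.filter (fun i => colsOf S j i = true)).card := by
      rw [Finset.card_eq_sum_card_fiberwise (f := Prod.snd) (t := Finset.univ)
        (fun x _ => Finset.mem_univ _)]
      apply Finset.sum_congr rfl
      intro j _
      apply Finset.card_nbij' (i := Prod.fst) (j := fun i => (i, j))
      · intro p hp
        simp only [Finset.mem_coe, Finset.mem_filter] at hp ⊢
        have : p = (p.1, j) := by
          ext
          · rfl
          · exact congrArg Fin.val hp.2
        simp only [colsOf, Finset.mem_univ, true_and, decide_eq_true_eq]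
        rw [← this]; exact hp.1
      · intro i hi
        simp only [Finset.mem_coe, Finset.mem_filter, colsOf, Finset.mem_univ, true_and,
          decide_eq_true_eq] at hi ⊢
        exact ⟨hi, trivial⟩
      · intro p hp
        simp only [Finset.mem_coe, Finset.mem_filter] at hp
        ext
        · rfl
        · exact (congrArg Fin.val hp.2).symm
      · intro i _
        rfl
    rw [hcard, ← Finset.prod_pow_eq_pow_sum]
    rfl

theorem king_two_n_domination_poly_at_neg_one (n : ℕ) :
    ∑ S ∈ Finset.univ.filter (IsDomSet (kingGraph 2 n)), (-1 : ℤ) ^ S.card =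
      (-1 : ℤ) ^ ((n + 1) / 2) := by
  rw [sum_king_eq]
  match n with
  | 0 => decide
  | (m + 1) =>
    have hsplit : ∀ c : Fin (m + 1) → KCol, kdom c ↔
        (fun c' => stA c' ∨ stB c') c := by
      intro c
      constructor
      · intro h
        by_cases ho : kocc c 0
        · exact Or.inl ⟨h, ho⟩
        · exact Or.inr ⟨h, ho⟩
      · rintro (⟨h, _⟩ | ⟨h, _⟩) <;> exact h
    rw [Finset.filter_congr (fun c _ => by rw [hsplit c])]
    have hAB : (gA m : ℤ) + gB m = (-1 : ℤ) ^ ((m + 1 + 1) / 2) := by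
      have htbl := g_eq_tbl m
      unfold ktbl at htbl
      have hm : m % 4 = 0 ∨ m % 4 = 1 ∨ m % 4 = 2 ∨ m % 4 = 3 := by omega
      rcases hm with h | h | h | h
      · rw [h] at htbl
        simp only [Prod.mk.injEq] at htbl
        rw [htbl.1, htbl.2.1]
        have hodd : Odd ((m + 1 + 1) / 2) := by rw [Nat.odd_iff]; omega
        rw [hodd.neg_one_pow]; ring
      · rw [h] at htbl
        simp only [Prod.mk.injEq] at htbl
        rw [htbl.1, htbl.2.1]
        have hodd : Odd ((m + 1 + 1) / 2) := by rw [Nat.odd_iff]; omega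
        rw [hodd.neg_one_pow]; ring
      · rw [h] at htbl
        simp only [Prod.mk.injEq] at htbl
        rw [htbl.1, htbl.2.1]
        have heven : Even ((m + 1 + 1) / 2) := by rw [Nat.even_iff]; omega
        rw [heven.neg_one_pow]; ring
      · rw [h] at htbl
        simp only [Prod.mk.injEq] at htbl
        rw [htbl.1, htbl.2.1]
        have heven : Even ((m + 1 + 1) / 2) := by rw [Nat.even_iff]; omega
        rw [heven.neg_one_pow]; ring
    rw [← hAB]
    unfold gA gB
    rw [Finset.sum_filter, Finset.sum_filter, Finset.sum_filter, ← Finset.sum_add_distrib]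
    apply Finset.sum_congr rfl
    intro c _
    by_cases hA : stA c
    · have hB : ¬ stB c := fun h => h.2 hA.2
      simp [hA, hB]
    · by_cases hB : stB c <;> simp [hA, hB]
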